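/- Let W² be a nonnegative random variable with PDF f(t) = ((2b₀m)/(2b₀m+Ω))^m · (1/(2b₀)) · exp(−t/(2b₀)) · Σ_{n=0}^∞ ((m)_n/((1)_n n!)) · (Ω t/(2b₀(2b₀m+Ω)))^n for t ≥ 0, where m, b₀, Ω > 0 and (·)_n is the Pochhammer symbol. Then its moment generating function (Laplace transform evaluated at −σ) satisfies M(σ) = (2b₀m)^m (1+2b₀σ)^{m−1} / [(2b₀m+Ω)(1+2b₀σ) − Ω]^m for σ ≥ 0. -/

import Mathlib

open Real Set MeasureTheory


lemma aux_integrable {a r : ℝ} (ha : 0 < a) (hr : 0 < r) :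
    IntegrableOn (fun t : ℝ => t ^ (a - 1) * Real.exp (-(r * t))) (Ioi 0) := by
  have := integrableOn_rpow_mul_exp_neg_mul_rpow (p := 1) (s := a - 1) (b := r)
    (by linarith) one_pos hr
  refine this.congr_fun (fun t ht => ?_) measurableSet_Ioi
  dsimp only
  rw [Real.rpow_one, neg_mul]

lemma aux_pow_integrable {n : ℕ} {r : ℝ} (hr : 0 < r) :
    IntegrableOn (fun t : ℝ => t ^ n * Real.exp (-(r * t))) (Ioi 0) := by
  refine (aux_integrable (a := (n : ℝ) + 1) (by positivity) hr).congr_fun (fun t ht => ?_)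
    measurableSet_Ioi
  dsimp only
  rw [add_sub_cancel_right, Real.rpow_natCast]

lemma aux_pow_integral {n : ℕ} {r : ℝ} (hr : 0 < r) :
    ∫ t in Ioi (0:ℝ), t ^ n * Real.exp (-(r * t)) = n.factorial / r ^ (n + 1) := by
  have h := Real.integral_rpow_mul_exp_neg_mul_Ioi (a := (n:ℝ) + 1) (by positivity) hr
  rw [add_sub_cancel_right] at h
  rw [show (∫ t in Ioi (0:ℝ), t ^ n * Real.exp (-(r * t)))
      = ∫ t in Ioi (0:ℝ), t ^ ((n:ℝ)) * Real.exp (-(r * t)) from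
    setIntegral_congr_fun measurableSet_Ioi (fun t ht => by rw [Real.rpow_natCast]), h,
    Real.Gamma_nat_eq_factorial,
    show ((n:ℝ) + 1) = ((n+1 : ℕ) : ℝ) by push_cast; ring, Real.rpow_natCast,
    div_pow, one_pow]
  ring

lemma aux_gamma_poch (m : ℝ) (hm : 0 < m) (n : ℕ) :
    Real.Gamma (m + n) = (ascPochhammer ℝ n).eval m * Real.Gamma m := by
  induction n with
  | zero => simp
  | succ k ih =>
    have : m + (k + 1 : ℕ) = (m + k) + 1 := by push_cast; ring
    rw [this, Real.Gamma_add_one (by positivity), ih, ascPochhammer_succ_eval]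
    ring


lemma aux_summable {m y : ℝ} (hm : 0 < m) (hy0 : 0 ≤ y) (hy1 : y < 1) :
    Summable (fun n : ℕ => (ascPochhammer ℝ n).eval m * y ^ n / n.factorial) := by
  obtain ⟨r, hyr, hr1⟩ : ∃ r, y < r ∧ r < 1 := ⟨(1 + y) / 2, by linarith, by linarith⟩
  have hr0 : 0 ≤ r := le_trans hy0 hyr.le
  refine summable_of_ratio_norm_eventually_le hr1 ?_
  rw [Filter.eventually_atTop]
  refine ⟨⌈m * y / (r - y)⌉₊, fun n hn => ?_⟩
  have hn' : m * y / (r - y) ≤ n := le_trans (Nat.le_ceil _) (by exact_mod_cast hn)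
  have hry : 0 < r - y := by linarith
  have key : m * y ≤ (r - y) * n := by
    rw [div_le_iff₀ hry] at hn'; linarith [hn']
  have hpos : (0:ℝ) ≤ (ascPochhammer ℝ n).eval m := (ascPochhammer_pos n m hm).le
  have hfac : (0:ℝ) < n.factorial := by positivity
  rw [Real.norm_eq_abs, Real.norm_eq_abs,
    abs_of_nonneg (div_nonneg (mul_nonneg (ascPochhammer_pos _ m hm).le (by positivity))
      (by positivity)),
    abs_of_nonneg (div_nonneg (mul_nonneg hpos (by positivity)) (by positivity)),
    ascPochhammer_succ_eval, Nat.factorial_succ]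
  push_cast
  rw [div_le_iff₀ (by positivity)]
  have hrhs : r * ((ascPochhammer ℝ n).eval m * y ^ n / ↑n.factorial) * ((↑n + 1) * ↑n.factorial)
      = ((ascPochhammer ℝ n).eval m * y ^ n) * (r * (↑n + 1)) := by
    field_simp
  rw [hrhs]
  have h2 : (m + n) * y ≤ r * (n + 1) := by nlinarith [key, hy0]
  calc (ascPochhammer ℝ n).eval m * (m + ↑n) * y ^ (n + 1)
      = ((ascPochhammer ℝ n).eval m * y ^ n) * ((m + n) * y) := by ring
    _ ≤ ((ascPochhammer ℝ n).eval m * y ^ n) * (r * (↑n + 1)) :=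
        mul_le_mul_of_nonneg_left h2 (by positivity)


lemma exp_tsum (x : ℝ) : ∑' n : ℕ, x ^ n / n.factorial = Real.exp x := by
  rw [Real.exp_eq_exp_ℝ, NormedSpace.exp_eq_tsum_div]

lemma aux_binomial {m y : ℝ} (hm : 0 < m) (hy0 : 0 ≤ y) (hy1 : y < 1) :
    ∑' n : ℕ, (ascPochhammer ℝ n).eval m * y ^ n / n.factorial = (1 - y) ^ (-m) := by
  have hΓ : 0 < Real.Gamma m := Real.Gamma_pos_of_pos hm
  have hc : 0 < 1 - y := by linarith
  set a : ℕ → ℝ := fun n => (ascPochhammer ℝ n).eval m * y ^ n / n.factorial with ha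
  have hsum : Summable a := aux_summable hm hy0 hy1
  have ha_nonneg : ∀ n, 0 ≤ a n := fun n =>
    div_nonneg (mul_nonneg (ascPochhammer_pos n m hm).le (by positivity)) (by positivity)
  set g : ℕ → ℝ → ℝ := fun n t => y ^ n / n.factorial * (t ^ (m - 1) * Real.exp (-t) * t ^ n)
    with hg
  -- each g n is integrable on Ioi 0 with integral a n * Γ m
  have hg_eq : ∀ n : ℕ, ∀ t ∈ Ioi (0:ℝ), g n t
      = y ^ n / n.factorial * (t ^ ((m + n) - 1) * Real.exp (-(1 * t))) := by
    intro n t ht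
    simp only [hg]
    rw [show t ^ (m-1) * Real.exp (-t) * t ^ n = t ^ (m-1) * t ^ n * Real.exp (-t) by ring,
      ← Real.rpow_natCast t n, ← Real.rpow_add ht, one_mul]
    ring_nf
  have hg_int : ∀ n : ℕ, IntegrableOn (g n) (Ioi 0) := by
    intro n
    have h0 : IntegrableOn
        (fun t : ℝ => y ^ n / n.factorial * (t ^ ((m + n) - 1) * Real.exp (-(1 * t))))
        (Ioi 0) :=
      (aux_integrable (a := m + n) (by positivity) one_pos).const_mul _
    exact h0.congr_fun (fun t ht => (hg_eq n t ht).symm) measurableSet_Ioi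
  have hg_val : ∀ n : ℕ, ∫ t in Ioi (0:ℝ), g n t = a n * Real.Gamma m := by
    intro n
    rw [setIntegral_congr_fun measurableSet_Ioi (hg_eq n), integral_const_mul,
      Real.integral_rpow_mul_exp_neg_mul_Ioi (by positivity) one_pos]
    rw [aux_gamma_poch m hm n, ha]
    simp
    ring
  have hg_nonneg : ∀ n : ℕ, ∀ t ∈ Ioi (0:ℝ), 0 ≤ g n t := by
    intro n t ht
    have ht' : (0:ℝ) < t := ht
    have := Real.rpow_nonneg ht'.le (m - 1)
    positivity
  have hg_meas : ∀ n : ℕ, AEMeasurable (fun t => ENNReal.ofReal (g n t))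
      (volume.restrict (Ioi 0)) := by
    intro n
    apply Measurable.aemeasurable
    apply ENNReal.measurable_ofReal.comp
    rw [hg]
    fun_prop
  -- ENNReal chain
  have key : ENNReal.ofReal ((∑' n, a n) * Real.Gamma m)
      = ENNReal.ofReal ((1 / (1 - y)) ^ m * Real.Gamma m) := by
    calc ENNReal.ofReal ((∑' n, a n) * Real.Gamma m)
        = ENNReal.ofReal (∑' n, a n * Real.Gamma m) := by rw [tsum_mul_right]
      _ = ∑' n, ENNReal.ofReal (a n * Real.Gamma m) :=
          ENNReal.ofReal_tsum_of_nonneg (fun n => mul_nonneg (ha_nonneg n) hΓ.le)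
            (hsum.mul_right _)
      _ = ∑' n, ∫⁻ t in Ioi (0:ℝ), ENNReal.ofReal (g n t) := by
          refine tsum_congr fun n => ?_
          rw [← hg_val n]
          exact ofReal_integral_eq_lintegral_ofReal (hg_int n)
            ((ae_restrict_iff' measurableSet_Ioi).2 (Filter.Eventually.of_forall
              (hg_nonneg n)))
      _ = ∫⁻ t in Ioi (0:ℝ), ∑' n, ENNReal.ofReal (g n t) := (lintegral_tsum hg_meas).symm
      _ = ∫⁻ t in Ioi (0:ℝ), ENNReal.ofReal (t ^ (m-1) * Real.exp (-((1-y) * t))) := by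
          refine setLIntegral_congr_fun measurableSet_Ioi
            (fun t ht => ?_)
          have ht' : (0:ℝ) < t := ht
          have hpt : ∀ n : ℕ, g n t = (t ^ (m-1) * Real.exp (-t)) * ((y*t) ^ n / n.factorial) := by
            intro n; rw [hg, mul_pow]; ring
          have hsumt : Summable (fun n : ℕ => (y*t) ^ n / (n.factorial : ℝ)) :=
            Real.summable_pow_div_factorial (y*t)
          rw [← ENNReal.ofReal_tsum_of_nonneg (hg_nonneg · t ht) ?_]
          · congr 1
            rw [tsum_congr hpt, tsum_mul_left, exp_tsum, mul_assoc, ← Real.exp_add]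
            congr 1
            ring
          · refine Summable.congr (hsumt.mul_left (t ^ (m-1) * Real.exp (-t))) fun n => ?_
            rw [hpt n]
      _ = ENNReal.ofReal ((1 / (1 - y)) ^ m * Real.Gamma m) := by
          rw [← ofReal_integral_eq_lintegral_ofReal (aux_integrable hm hc)
            ((ae_restrict_iff' measurableSet_Ioi).2 (Filter.Eventually.of_forall
              fun t ht => by
                have ht' : (0:ℝ) < t := ht
                positivity))]
          rw [Real.integral_rpow_mul_exp_neg_mul_Ioi hm hc]
  have hS : (∑' n, a n) * Real.Gamma m = (1 / (1 - y)) ^ m * Real.Gamma m := by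
    have h1 : 0 ≤ (∑' n, a n) * Real.Gamma m :=
      mul_nonneg (tsum_nonneg ha_nonneg) hΓ.le
    have h2 : 0 ≤ (1 / (1 - y)) ^ m * Real.Gamma m := by positivity
    exact (ENNReal.ofReal_eq_ofReal_iff h1 h2).1 key
  have := mul_right_cancel₀ hΓ.ne' hS
  rw [ha] at this
  rw [this, one_div, Real.inv_rpow hc.le, ← Real.rpow_neg hc.le]


set_option maxHeartbeats 1000000 in
/-- The shadowed-Rician power density has moment generating function (Laplace transform)
`M(σ) = (2b₀m)^m (1+2b₀σ)^{m−1} / [(2b₀m+Ω)(1+2b₀σ) − Ω]^m` for `σ ≥ 0`. -/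
theorem stmt7 (m b0 Om : ℝ) (hm : 0 < m) (hb0 : 0 < b0) (hOm : 0 < Om)
    (σ : ℝ) (hσ : 0 ≤ σ) :
    (∫ t in Ioi (0:ℝ),
        Real.exp (-σ * t) *
          ((2 * b0 * m / (2 * b0 * m + Om)) ^ m * (1 / (2 * b0))
            * Real.exp (-t / (2 * b0))
            * ∑' (n : ℕ),
                ((ascPochhammer ℝ n).eval m / ((Nat.factorial n : ℝ) * (Nat.factorial n : ℝ)))
                  * (Om * t / (2 * b0 * (2 * b0 * m + Om))) ^ n))
      = (2 * b0 * m) ^ m * (1 + 2 * b0 * σ) ^ (m - 1)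
          / ((2 * b0 * m + Om) * (1 + 2 * b0 * σ) - Om) ^ m := by
  have hb2 : (0:ℝ) < 2 * b0 := by linarith
  set P : ℝ := 2 * b0 * m with hP
  set Q : ℝ := 2 * b0 * m + Om with hQ
  set u : ℝ := 1 + 2 * b0 * σ with hu
  have hP0 : 0 < P := by positivity
  have hQ0 : 0 < Q := by rw [hQ]; positivity
  have hu0 : 0 < u := by rw [hu]; positivity
  have hu1 : 1 ≤ u := by rw [hu]; nlinarith
  set lam : ℝ := σ + 1 / (2 * b0) with hlam
  have hlam0 : 0 < lam := by rw [hlam]; positivity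
  have hlam_eq : lam = u / (2 * b0) := by rw [hlam, hu]; field_simp; ring
  set r : ℝ := Om / (2 * b0 * Q) with hr
  have hr0 : 0 < r := by rw [hr]; positivity
  set A : ℝ := (P / Q) ^ m * (1 / (2 * b0)) with hA
  have hA0 : 0 < A := by
    rw [hA]; positivity
  set y : ℝ := Om / (Q * u) with hy
  have hy0 : 0 ≤ y := by rw [hy]; positivity
  have hy1 : y < 1 := by
    rw [hy, div_lt_one (by positivity)]
    nlinarith [mul_le_mul_of_nonneg_left hu1 hQ0.le]
  have hylam : r = y * lam := by
    rw [hr, hy, hlam_eq]; field_simp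
  set c : ℕ → ℝ := fun n => (ascPochhammer ℝ n).eval m
    / ((Nat.factorial n : ℝ) * (Nat.factorial n : ℝ)) with hc
  have hc0 : ∀ n, 0 ≤ c n := fun n =>
    div_nonneg (ascPochhammer_pos n m hm).le (by positivity)
  set h : ℕ → ℝ → ℝ := fun n t => (A * c n * r ^ n) * (t ^ n * Real.exp (-(lam * t)))
    with hh
  set b : ℕ → ℝ := fun n => (A / lam) * ((ascPochhammer ℝ n).eval m * y ^ n / n.factorial)
    with hb
  clear_value P Q u lam r A y c h b
  have hb_nonneg : ∀ n, 0 ≤ b n := fun n => by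
    have := (ascPochhammer_pos n m hm).le
    rw [hb]; positivity
  have hb_sum : Summable b := by rw [hb]; exact (aux_summable hm hy0 hy1).mul_left _
  -- integrand = tsum of h
  have hpt : ∀ t ∈ Ioi (0:ℝ),
      Real.exp (-σ * t) *
        (A * Real.exp (-t / (2 * b0))
          * ∑' (n : ℕ),
              ((ascPochhammer ℝ n).eval m / ((Nat.factorial n : ℝ) * (Nat.factorial n : ℝ)))
                * (Om * t / (2 * b0 * Q)) ^ n)
      = ∑' n, h n t := by
    intro t ht
    have hexp : Real.exp (-σ * t) * Real.exp (-t / (2 * b0)) = Real.exp (-(lam * t)) := by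
      rw [← Real.exp_add, hlam]
      congr 1
      field_simp
      ring
    have hterm : ∀ n : ℕ, h n t = (A * Real.exp (-(lam * t)))
        * (((ascPochhammer ℝ n).eval m / ((Nat.factorial n : ℝ) * (Nat.factorial n : ℝ)))
            * (Om * t / (2 * b0 * Q)) ^ n) := by
      intro n
      simp only [hh, hc]
      rw [show Om * t / (2 * b0 * Q) = r * t by rw [hr]; ring, mul_pow]
      ring
    rw [tsum_congr hterm, tsum_mul_left, ← hexp]
    ring
  rw [setIntegral_congr_fun measurableSet_Ioi hpt]
  -- each h n integrable with known integral
  have h_int : ∀ n, IntegrableOn (h n) (Ioi 0) := by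
    intro n
    have h0 : IntegrableOn (fun t : ℝ => (A * c n * r ^ n) * (t ^ n * Real.exp (-(lam * t))))
        (Ioi 0) := (aux_pow_integrable (n := n) hlam0).const_mul _
    exact h0.congr_fun (fun t ht => by rw [hh]) measurableSet_Ioi
  have h_val : ∀ n, ∫ t in Ioi (0:ℝ), h n t = b n := by
    intro n
    simp only [hh, hb, hc]
    rw [integral_const_mul, aux_pow_integral hlam0, hylam]
    have hfac : ((n.factorial : ℝ)) ≠ 0 := by positivity
    rw [mul_pow, pow_succ]
    have hlamn : lam ^ n ≠ 0 := pow_ne_zero _ hlam0.ne'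
    field_simp
  have h_nonneg : ∀ n, ∀ t ∈ Ioi (0:ℝ), 0 ≤ h n t := by
    intro n t ht
    have ht' : (0:ℝ) < t := ht
    have := hc0 n
    simp only [hh]
    positivity
  have h_meas : ∀ n, AEStronglyMeasurable (h n) (volume.restrict (Ioi 0)) := by
    intro n
    apply Measurable.aestronglyMeasurable
    simp only [hh]
    fun_prop
  -- swap
  rw [MeasureTheory.integral_tsum h_meas ?_]
  · simp only [tsum_congr h_val, hb]
    rw [tsum_mul_left, aux_binomial hm hy0 hy1]
    -- final algebra
    have hD : 0 < Q * u - Om := by nlinarith [mul_le_mul_of_nonneg_left hu1 hQ0.le]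
    have h1y : 1 - y = (Q * u - Om) / (Q * u) := by
      rw [hy]; field_simp
    rw [h1y, Real.rpow_neg (by positivity), ← Real.inv_rpow (by positivity),
      inv_div, hA, hlam_eq]
    have e1 : (P / Q) ^ m = P ^ m / Q ^ m := Real.div_rpow hP0.le hQ0.le m
    have e2 : (Q * u / (Q * u - Om)) ^ m = Q ^ m * u ^ m / (Q * u - Om) ^ m := by
      rw [Real.div_rpow (by positivity) hD.le, Real.mul_rpow hQ0.le hu0.le]
    have e3 : u ^ (m - 1) = u ^ m / u := by
      rw [Real.rpow_sub hu0, Real.rpow_one]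
    rw [e1, e2, e3]
    have h4 := (Real.rpow_pos_of_pos hQ0 m).ne'
    have h5 := (Real.rpow_pos_of_pos hD m).ne'
    field_simp
  · -- finiteness
    have : ∀ n, ∫⁻ t in Ioi (0:ℝ), ‖h n t‖ₑ = ENNReal.ofReal (b n) := by
      intro n
      rw [← h_val n, ofReal_integral_eq_lintegral_ofReal (h_int n)
        ((ae_restrict_iff' measurableSet_Ioi).2 (Filter.Eventually.of_forall (h_nonneg n)))]
      refine setLIntegral_congr_fun measurableSet_Ioi
        (fun t ht => ?_)
      rw [Real.enorm_eq_ofReal (h_nonneg n t ht)]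
    rw [tsum_congr this, ← ENNReal.ofReal_tsum_of_nonneg hb_nonneg hb_sum]
    exact ENNReal.ofReal_ne_top
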